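/- Let 1/2 ≤ m < 1 and K ∈ (0,1). Set A = N^{-1}(m), A_K = (U_{1/K})^{-1}(m), and B_K = N^{-1}(m + (1/(2√π √(log(1/K)))) e^{-A²/2}) (assuming the argument is < 1). Then 1/(√2√(log(1/K)) + B_K) ≤ A_K - A ≤ (1/(√2√(log(1/K)) + A)) · exp((B_K² - A²)/2). -/

import Mathlib

open Real Set

noncomputable def stdNormalCDF (x : ℝ) : ℝ :=
  (1 / Real.sqrt (2 * Real.pi)) * ∫ y in Set.Iic x, Real.exp (-(y ^ 2) / 2)

noncomputable def U (K x : ℝ) : ℝ :=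
  stdNormalCDF x - (1 / (2 * Real.sqrt Real.pi * Real.sqrt (Real.log K))) * Real.exp (-(x ^ 2) / 2)

open MeasureTheory

open MeasureTheory in
lemma gauss_integrable : Integrable (fun y : ℝ => Real.exp (-(y ^ 2) / 2)) := by
  have h := integrable_exp_neg_mul_sq (by norm_num : (0:ℝ) < 1/2)
  convert h using 2 with y
  ring_nf

lemma cdf_sub (x y : ℝ) :
    stdNormalCDF y - stdNormalCDF x
      = (1 / Real.sqrt (2 * Real.pi)) * ∫ t in x..y, Real.exp (-(t ^ 2) / 2) := by
  unfold stdNormalCDF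
  rw [← mul_sub, intervalIntegral.integral_Iic_sub_Iic gauss_integrable.integrableOn
    gauss_integrable.integrableOn]

lemma cdf_zero : stdNormalCDF 0 = 1 / 2 := by
  have heven : (∫ t in Iic (0:ℝ), Real.exp (-(t ^ 2) / 2))
      = ∫ t in Ioi (0:ℝ), Real.exp (-(t ^ 2) / 2) := by
    have h := integral_comp_neg_Iic 0 (fun t => Real.exp (-(t ^ 2) / 2))
    simp only [neg_zero] at h
    rw [← h]
    congr 1 with t
    ring_nf
  have htot : (∫ t : ℝ, Real.exp (-(t ^ 2) / 2)) = Real.sqrt (2 * π) := by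
    have h := integral_gaussian (1/2)
    have : (∫ t : ℝ, Real.exp (-(t ^ 2) / 2)) = ∫ t : ℝ, Real.exp (-(1/2) * t ^ 2) := by
      congr 1 with t; ring_nf
    rw [this, h]
    rw [show (2:ℝ) * π = π * 2 by ring, show π / (1/2) = π * 2 by ring]
  have hsplit : (∫ t in Iic (0:ℝ), Real.exp (-(t ^ 2) / 2))
      + (∫ t in Ioi (0:ℝ), Real.exp (-(t ^ 2) / 2)) = Real.sqrt (2 * π) := by
    rw [← htot, intervalIntegral.integral_Iic_add_Ioi gauss_integrable.integrableOn
      gauss_integrable.integrableOn]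
  have hIic : (∫ t in Iic (0:ℝ), Real.exp (-(t ^ 2) / 2)) = Real.sqrt (2 * π) / 2 := by
    rw [heven] at hsplit; linarith [hsplit, heven]
  unfold stdNormalCDF
  rw [hIic]
  have h2 : Real.sqrt (2 * π) ≠ 0 := by positivity
  field_simp

lemma cdf_strictMono : StrictMono stdNormalCDF := by
  intro x y hxy
  have h := cdf_sub x y
  have hpos : 0 < ∫ t in x..y, Real.exp (-(t ^ 2) / 2) := by
    apply intervalIntegral.intervalIntegral_pos_of_pos_on
    · exact gauss_integrable.intervalIntegrable
    · intro t _; positivity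
    · exact hxy
  nlinarith [Real.sqrt_pos.mpr (by positivity : (0:ℝ) < 2 * π), h,
    mul_pos (by positivity : (0:ℝ) < 1 / Real.sqrt (2*π)) hpos]

lemma int_upper {x y : ℝ} (hx : 0 ≤ x) (hxy : x ≤ y) :
    (∫ t in x..y, Real.exp (-(t ^ 2) / 2)) ≤ (y - x) * Real.exp (-(x ^ 2) / 2) := by
  have := intervalIntegral.integral_mono_on hxy gauss_integrable.intervalIntegrable
    (intervalIntegrable_const (c := Real.exp (-(x ^ 2) / 2)))
    (fun t ht => by
      apply Real.exp_le_exp.mpr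
      nlinarith [ht.1, ht.2])
  simpa [intervalIntegral.integral_const, smul_eq_mul] using this

lemma int_lower {x y : ℝ} (hx : 0 ≤ x) (hxy : x ≤ y) :
    (y - x) * Real.exp (-(y ^ 2) / 2) ≤ ∫ t in x..y, Real.exp (-(t ^ 2) / 2) := by
  have := intervalIntegral.integral_mono_on hxy
    (intervalIntegrable_const (c := Real.exp (-(y ^ 2) / 2)))
    gauss_integrable.intervalIntegrable
    (fun t ht => by
      apply Real.exp_le_exp.mpr
      nlinarith [ht.1, ht.2])
  simpa [intervalIntegral.integral_const, smul_eq_mul] using this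


set_option maxHeartbeats 1000000 in
/-- the two-sided bound on A_K - A, where A = N⁻¹(m), A_K = (U_{1/K})⁻¹(m) and
B_K = N⁻¹(m + (1/(2√π √(log(1/K)))) e^{-A²/2}), all expressed via witnesses. -/
theorem AK_minus_A_bounds (K m A AK BK : ℝ) (hK₁ : 0 < K) (hK₂ : K < 1)
    (hm₁ : 1 / 2 ≤ m) (hm₂ : m < 1)
    (hA : stdNormalCDF A = m)
    (hAK₁ : -(Real.sqrt 2 * Real.sqrt (Real.log (1 / K))) ≤ AK)
    (hAK₂ : U (1 / K) AK = m)
    (harg : m + (1 / (2 * Real.sqrt Real.pi * Real.sqrt (Real.log (1 / K))))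
        * Real.exp (-(A ^ 2) / 2) < 1)
    (hBK : stdNormalCDF BK
        = m + (1 / (2 * Real.sqrt Real.pi * Real.sqrt (Real.log (1 / K))))
            * Real.exp (-(A ^ 2) / 2)) :
    1 / (Real.sqrt 2 * Real.sqrt (Real.log (1 / K)) + BK) ≤ AK - A ∧
    AK - A ≤ (1 / (Real.sqrt 2 * Real.sqrt (Real.log (1 / K)) + A))
        * Real.exp ((BK ^ 2 - A ^ 2) / 2) := by
  unfold U at hAK₂
  set L := Real.sqrt 2 * Real.sqrt (Real.log (1 / K)) with hLdef
  set c := 1 / (2 * Real.sqrt Real.pi * Real.sqrt (Real.log (1 / K))) with hcdef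
  have hlog : 0 < Real.log (1 / K) := Real.log_pos (one_lt_one_div hK₁ hK₂)
  have hsl : 0 < Real.sqrt (Real.log (1 / K)) := Real.sqrt_pos.mpr hlog
  have hs2 : (0:ℝ) < Real.sqrt 2 := Real.sqrt_pos.mpr (by norm_num)
  have hsπ : (0:ℝ) < Real.sqrt π := Real.sqrt_pos.mpr Real.pi_pos
  have hL : 0 < L := mul_pos hs2 hsl
  have hc : 0 < c := by
    rw [hcdef]
    positivity
  have hs2π : (0:ℝ) < Real.sqrt (2 * π) := Real.sqrt_pos.mpr (by positivity)
  have hkey : c * Real.sqrt (2 * π) * L = 1 := by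
    rw [hcdef, hLdef, Real.sqrt_mul (by norm_num : (0:ℝ) ≤ 2)]
    have h22 : Real.sqrt 2 * Real.sqrt 2 = 2 := Real.mul_self_sqrt (by norm_num)
    have hne : Real.sqrt π * Real.sqrt (Real.log (1 / K)) ≠ 0 := by positivity
    field_simp
    linear_combination h22
  clear_value L c
  clear hLdef hcdef
  have hNAK : stdNormalCDF AK = m + c * Real.exp (-(AK ^ 2) / 2) := by linarith
  have hA0 : 0 ≤ A := by
    apply cdf_strictMono.le_iff_le.mp
    rw [cdf_zero, hA]; exact hm₁
  have hAAK : A < AK := by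
    apply cdf_strictMono.lt_iff_lt.mp
    rw [hA, hNAK]
    nlinarith [Real.exp_pos (-(AK ^ 2) / 2)]
  have hAKBK : AK ≤ BK := by
    apply cdf_strictMono.le_iff_le.mp
    rw [hNAK, hBK]
    have : Real.exp (-(AK ^ 2) / 2) ≤ Real.exp (-(A ^ 2) / 2) := by
      apply Real.exp_le_exp.mpr; nlinarith
    nlinarith
  have hI : (∫ t in A..AK, Real.exp (-(t ^ 2) / 2))
      = c * Real.exp (-(AK ^ 2) / 2) * Real.sqrt (2 * π) := by
    have hd := cdf_sub A AK
    rw [hNAK, hA] at hd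
    have : c * Real.exp (-(AK ^ 2) / 2)
        = (1 / Real.sqrt (2 * π)) * ∫ t in A..AK, Real.exp (-(t ^ 2) / 2) := by linarith
    rw [one_div, inv_mul_eq_div, eq_div_iff (ne_of_gt hs2π)] at this
    linarith
  have hup := int_upper hA0 hAAK.le
  have hlo := int_lower hA0 hAAK.le
  rw [hI] at hup hlo
  -- D * L ≤ 1
  have eK := Real.exp_pos (-(AK ^ 2) / 2)
  have eA := Real.exp_pos (-(A ^ 2) / 2)
  have hDle : AK - A ≤ c * Real.sqrt (2 * π) := by
    nlinarith
  have hDL : (AK - A) * L ≤ 1 := by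
    nlinarith [mul_le_mul_of_nonneg_right hDle hL.le]
  -- exp(-AK²/2) ≤ (AK-A) * L * exp(-A²/2)
  have h2 : Real.exp (-(AK ^ 2) / 2) ≤ (AK - A) * L * Real.exp (-(A ^ 2) / 2) := by
    have := mul_le_mul_of_nonneg_right hup hL.le
    nlinarith
  -- exp lower bound: e_A * (1 + d) ≤ e_K where d = (A²-AK²)/2
  have hexp1 : Real.exp (-(A ^ 2) / 2) * (1 + (A ^ 2 - AK ^ 2) / 2)
      ≤ Real.exp (-(AK ^ 2) / 2) := by
    have h := Real.add_one_le_exp ((A ^ 2 - AK ^ 2) / 2)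
    have hm : Real.exp (-(A ^ 2) / 2) * Real.exp ((A ^ 2 - AK ^ 2) / 2)
        = Real.exp (-(AK ^ 2) / 2) := by
      rw [← Real.exp_add]; ring_nf
    nlinarith
  have hone : 1 + (A ^ 2 - AK ^ 2) / 2 ≤ (AK - A) * L := by nlinarith
  have hLBK : 0 < L + BK := by nlinarith
  have hLA : 0 < L + A := by nlinarith
  constructor
  · rw [div_le_iff₀ hLBK]
    nlinarith
  · rw [show 1 / (L + A) * Real.exp ((BK ^ 2 - A ^ 2) / 2)
        = Real.exp ((BK ^ 2 - A ^ 2) / 2) / (L + A) by ring, le_div_iff₀ hLA]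
    have hE := Real.add_one_le_exp ((BK ^ 2 - A ^ 2) / 2)
    nlinarith
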